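/- Let δ ∈ [0,∞), α ∈ (0,∞), let n ≥ 1 be an integer and let x ∈ (0,∞). Then ∑_{k=0}^{n-1} ((-δ)_k / k!) γ(α+k,x)/x^{α+k} + r_n(δ) γ(α+n,x)/x^{α+n} ≤ N(α,δ,x) ≤ ∑_{k=0}^{n-1} ((-δ)_k / k!) γ(α+k,x)/x^{α+k} + R_n(δ) γ(α+n,x)/x^{α+n}, where r_n(δ) := min((-δ)_n/n!, −(1-δ)_{n-1}/(n-1)!) and R_n(δ) := max((-δ)_n/n!, −(1-δ)_{n-1}/(n-1)!). -/

import Mathlib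

open MeasureTheory Real Filter

/-- The Pochhammer symbol `(a)_k = a (a+1) ⋯ (a+k-1)`, with `(a)_0 = 1`. -/
noncomputable def poch (a : ℝ) : ℕ → ℝ
  | 0 => 1
  | k + 1 => poch a k * (a + k)

/-- The lower incomplete Gamma function `γ(ν,x) = ∫₀ˣ s^(ν-1) e^(-s) ds`. -/
noncomputable def lincGamma (ν x : ℝ) : ℝ := ∫ s in (0:ℝ)..x, s ^ (ν - 1) * Real.exp (-s)

/-- The reparametrized Kummer function `N(α,δ,x) = ∫₀¹ t^(α-1) (1-t)^δ e^(-xt) dt`. -/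
noncomputable def NKummer (α δ x : ℝ) : ℝ :=
  ∫ t in (0:ℝ)..1, t ^ (α - 1) * (1 - t) ^ δ * Real.exp (-(x * t))

section Aux

open intervalIntegral

lemma poch_succ_left (a : ℝ) : ∀ k : ℕ, poch a (k+1) = a * poch (a+1) k := by
  intro k
  induction k with
  | zero => simp [poch]
  | succ k ih =>
    show poch a (k+1) * (a + (k+1 : ℕ)) = a * (poch (a+1) k * ((a+1) + k))
    rw [ih]; push_cast; ring

lemma poch_one_eq (k : ℕ) : poch 1 k = k.factorial := by
  induction k with
  | zero => simp [poch]
  | succ k ih => show poch 1 k * (1 + k) = _; rw [ih]; push_cast [Nat.factorial_succ]; ring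

lemma poch_zero_eq {k : ℕ} (hk : 1 ≤ k) : poch (0:ℝ) k = 0 := by
  obtain ⟨m, rfl⟩ := Nat.exists_eq_add_of_le hk
  rw [show 1 + m = m + 1 by ring, poch_succ_left]; ring

noncomputable def Jfun (δ : ℝ) (n : ℕ) (t : ℝ) : ℝ :=
  ∫ v in (0:ℝ)..1, (1-v)^(n-1) * (1-t*v)^(δ-(n:ℝ))

lemma base_pos {t v : ℝ} (ht0 : 0 ≤ t) (ht1 : t < 1) (hv : v ∈ Set.Icc (0:ℝ) 1) :
    0 < 1 - t * v := by
  nlinarith [hv.1, hv.2, mul_le_of_le_one_right ht0 hv.2]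

lemma cont_rpow_base {t : ℝ} (ht0 : 0 ≤ t) (ht1 : t < 1) (p : ℝ) :
    ContinuousOn (fun v => (1-t*v)^p) (Set.Icc (0:ℝ) 1) := by
  apply ContinuousOn.rpow_const
  · exact (continuous_const.sub (continuous_const.mul continuous_id)).continuousOn
  · exact fun v hv => Or.inl (ne_of_gt (base_pos ht0 ht1 hv))

lemma inner_hasDeriv (t v : ℝ) : HasDerivAt (fun v : ℝ => 1 - t * v) (-t) v := by
  simpa using ((hasDerivAt_id v).const_mul t).const_sub 1

lemma J_one (δ : ℝ) {t : ℝ} (ht0 : 0 ≤ t) (ht1 : t < 1) :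
    δ * t * Jfun δ 1 t = 1 - (1-t)^δ := by
  have huIcc : Set.uIcc (0:ℝ) 1 = Set.Icc 0 1 := Set.uIcc_of_le zero_le_one
  have hderiv : ∀ v ∈ Set.uIcc (0:ℝ) 1,
      HasDerivAt (fun v => -((1-t*v)^δ)) (δ * t * (1-t*v)^(δ-1)) v := by
    intro v hv
    rw [huIcc] at hv
    have h := ((inner_hasDeriv t v).rpow_const (p := δ)
      (Or.inl (ne_of_gt (base_pos ht0 ht1 hv)))).neg
    convert (show HasDerivAt (fun v => -((1-t*v)^δ)) _ v from h) using 1; ring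
  have hint : IntervalIntegrable (fun v => δ * t * (1-t*v)^(δ-1)) volume 0 1 := by
    apply ContinuousOn.intervalIntegrable
    rw [huIcc]
    exact (continuousOn_const.mul (cont_rpow_base ht0 ht1 (δ-1)))
  have := integral_eq_sub_of_hasDerivAt hderiv hint
  have hJ : Jfun δ 1 t = ∫ v in (0:ℝ)..1, (1-t*v)^(δ-1) := by
    unfold Jfun
    refine integral_congr fun v _ => ?_
    norm_num
  rw [hJ, ← intervalIntegral.integral_const_mul, this]
  simp [Real.one_rpow]
  ring

lemma J_rec (δ : ℝ) {n : ℕ} (hn : 1 ≤ n) {t : ℝ} (ht0 : 0 ≤ t) (ht1 : t < 1) :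
    Jfun δ n t = 1/n + ((n - δ) * t / n) * Jfun δ (n+1) t := by
  have huIcc : Set.uIcc (0:ℝ) 1 = Set.Icc 0 1 := Set.uIcc_of_le zero_le_one
  have hn0 : (n:ℝ) ≠ 0 := Nat.cast_ne_zero.2 (by omega)
  set U : ℝ → ℝ := fun v => (1-t*v)^(δ-(n:ℝ)) with hU
  set U' : ℝ → ℝ := fun v => -t * (δ-(n:ℝ)) * (1-t*v)^(δ-(n:ℝ)-1) with hU'
  set V : ℝ → ℝ := fun v => -((1-v)^n / n) with hV
  set V' : ℝ → ℝ := fun v => (1-v)^(n-1) with hV'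
  have hu : ∀ v ∈ Set.uIcc (0:ℝ) 1, HasDerivAt U (U' v) v := by
    intro v hv
    rw [huIcc] at hv
    have h := (inner_hasDeriv t v).rpow_const (p := δ-(n:ℝ))
      (Or.inl (ne_of_gt (base_pos ht0 ht1 hv)))
    simpa [hU'] using h
  have hv : ∀ v ∈ Set.uIcc (0:ℝ) 1, HasDerivAt V (V' v) v := by
    intro v _
    have h1 : HasDerivAt (fun v : ℝ => 1 - v) (-1) v := by
      simpa using (hasDerivAt_id v).const_sub 1
    have h := ((h1.pow n).div_const (n:ℝ)).neg
    convert (show HasDerivAt V _ v from h) using 1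
    simp [hV']
    field_simp
  have hu' : IntervalIntegrable U' volume 0 1 := by
    apply ContinuousOn.intervalIntegrable
    rw [huIcc]
    exact continuousOn_const.mul (cont_rpow_base ht0 ht1 _)
  have hv' : IntervalIntegrable V' volume 0 1 :=
    ((continuous_const.sub continuous_id).pow _).intervalIntegrable _ _
  have key := integral_mul_deriv_eq_deriv_mul hu hv hu' hv'
  have hJn : Jfun δ n t = ∫ v in (0:ℝ)..1, U v * V' v := by
    unfold Jfun
    exact integral_congr fun v _ => mul_comm _ _
  have hend : U 1 * V 1 - U 0 * V 0 = 1/n := by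
    simp [hU, hV, zero_pow (show n ≠ 0 by omega)]
  have hrest : (∫ v in (0:ℝ)..1, U' v * V v)
      = (t * (δ - n) / n) * Jfun δ (n+1) t := by
    unfold Jfun
    rw [← intervalIntegral.integral_const_mul]
    refine integral_congr fun v _ => ?_
    simp only [hU', hV, Nat.add_sub_cancel]
    push_cast
    rw [show δ - ((n:ℝ)+1) = δ - n - 1 by ring]
    field_simp
  rw [hJn, key, hend, hrest]
  ring

lemma axioms_intJ {δ : ℝ} {n : ℕ} {t : ℝ} (ht0 : 0 ≤ t) (ht1 : t < 1) :
    IntervalIntegrable (fun v => (1-v)^(n-1) * (1-t*v)^(δ-(n:ℝ))) volume 0 1 := by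
  apply ContinuousOn.intervalIntegrable
  rw [Set.uIcc_of_le zero_le_one]
  exact ((continuous_const.sub continuous_id).pow _).continuousOn.mul
    (cont_rpow_base ht0 ht1 _)

lemma intervalIntegrable_one_sub_rpow {p : ℝ} (hp : -1 < p) :
    IntervalIntegrable (fun v : ℝ => (1-v)^p) volume 0 1 := by
  have h := (intervalIntegral.intervalIntegrable_rpow' (a := 0) (b := 1) hp).comp_sub_left 1
  norm_num at h
  exact h.symm

lemma integral_mono_Ico {f g : ℝ → ℝ} (hf : IntervalIntegrable f volume 0 1)
    (hg : IntervalIntegrable g volume 0 1) (h : ∀ v ∈ Set.Ico (0:ℝ) 1, f v ≤ g v) :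
    (∫ v in (0:ℝ)..1, f v) ≤ ∫ v in (0:ℝ)..1, g v := by
  apply integral_mono_ae_restrict zero_le_one hf hg
  have h1 := ae_restrict_mem (μ := volume) (measurableSet_Icc : MeasurableSet (Set.Icc (0:ℝ) 1))
  have h2 : ∀ᵐ v ∂(volume.restrict (Set.Icc (0:ℝ) 1)), v ≠ 1 := by
    rw [ae_iff]
    have he : {v : ℝ | ¬ v ≠ 1} = {1} := by ext v; simp
    rw [he, Measure.restrict_apply (measurableSet_singleton 1)]
    exact measure_mono_null Set.inter_subset_left Real.volume_singleton
  filter_upwards [h1, h2] with v hv hne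
  exact h v ⟨hv.1, lt_of_le_of_ne hv.2 hne⟩

lemma int_pow_eq {n : ℕ} (hn : 1 ≤ n) :
    (∫ v in (0:ℝ)..1, (1-v)^(n-1)) = 1/(n:ℝ) := by
  have := integral_comp_sub_left (a := (0:ℝ)) (b := 1) (fun u => u^(n-1)) 1
  norm_num at this
  rw [this, Nat.cast_sub hn]
  push_cast
  field_simp
  rw [sub_add_cancel]
  exact div_self (Nat.cast_ne_zero.2 (by omega))

lemma int_rpow_eq {δ : ℝ} (hδ : 0 < δ) :
    (∫ v in (0:ℝ)..1, (1-v)^(δ-1)) = 1/δ := by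
  have := integral_comp_sub_left (a := (0:ℝ)) (b := 1) (fun u => u^(δ-1)) 1
  norm_num at this
  rw [this, integral_rpow (Or.inl (by linarith))]
  rw [show δ - 1 + 1 = δ from by ring, Real.zero_rpow (ne_of_gt hδ), Real.one_rpow]
  ring

lemma pow_mul_rpow_eq {δ : ℝ} {n : ℕ} (hn : 1 ≤ n) {v : ℝ} (hv0 : 0 ≤ v) (hv1 : v < 1) :
    (1-v)^(n-1) * (1-v)^(δ-(n:ℝ)) = (1-v)^(δ-1) := by
  have hpos : (0:ℝ) < 1 - v := by linarith
  rw [← Real.rpow_natCast (1-v) (n-1), ← Real.rpow_add hpos]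
  congr 1
  rw [Nat.cast_sub hn]
  push_cast; ring

lemma J_bounds {δ : ℝ} (hδ : 0 < δ) {n : ℕ} (hn : 1 ≤ n) {t : ℝ} (ht0 : 0 ≤ t) (ht1 : t < 1) :
    min (1/δ) (1/(n:ℝ)) ≤ Jfun δ n t ∧ Jfun δ n t ≤ max (1/δ) (1/(n:ℝ)) := by
  have hn' : (0:ℝ) < n := by exact_mod_cast Nat.pos_of_ne_zero (by omega)
  have hJint := axioms_intJ (δ := δ) (n := n) ht0 ht1
  have hpowint : IntervalIntegrable (fun v : ℝ => (1-v)^(n-1)) volume 0 1 :=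
    ((continuous_const.sub continuous_id).pow _).intervalIntegrable _ _
  have hrpowint : IntervalIntegrable (fun v : ℝ => (1-v)^(δ-1)) volume 0 1 :=
    intervalIntegrable_one_sub_rpow (by linarith)
  rcases le_total δ (n:ℝ) with hcase | hcase
  · have hmin : min (1/δ) (1/(n:ℝ)) = 1/(n:ℝ) :=
      min_eq_right (one_div_le_one_div_of_le hδ hcase)
    have hmax : max (1/δ) (1/(n:ℝ)) = 1/δ :=
      max_eq_left (one_div_le_one_div_of_le hδ hcase)
    rw [hmin, hmax]
    constructor
    · rw [← int_pow_eq hn]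
      apply integral_mono_Ico hpowint hJint
      intro v hv
      have hb := base_pos ht0 ht1 ⟨hv.1, hv.2.le⟩
      have h1 : (1:ℝ) ≤ (1-t*v)^(δ-(n:ℝ)) :=
        Real.one_le_rpow_of_pos_of_le_one_of_nonpos hb (by nlinarith [mul_nonneg ht0 hv.1])
          (by linarith)
      nlinarith [pow_nonneg (by linarith [hv.2.le] : (0:ℝ) ≤ 1 - v) (n-1),
        mul_le_mul_of_nonneg_left h1 (pow_nonneg (by linarith [hv.2.le] : (0:ℝ) ≤ 1-v) (n-1))]
    · rw [← int_rpow_eq hδ]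
      apply integral_mono_Ico hJint hrpowint
      intro v hv
      have hvpos : (0:ℝ) < 1 - v := by linarith [hv.2]
      have h1 : (1-t*v)^(δ-(n:ℝ)) ≤ (1-v)^(δ-(n:ℝ)) :=
        Real.rpow_le_rpow_of_nonpos hvpos
          (by nlinarith [hv.1, mul_le_of_le_one_left hv.1 ht1.le]) (by linarith)
      calc (1-v)^(n-1) * (1-t*v)^(δ-(n:ℝ))
          ≤ (1-v)^(n-1) * (1-v)^(δ-(n:ℝ)) :=
            mul_le_mul_of_nonneg_left h1 (pow_nonneg hvpos.le _)
        _ = (1-v)^(δ-1) := pow_mul_rpow_eq hn hv.1 hv.2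
  · have hmin : min (1/δ) (1/(n:ℝ)) = 1/δ :=
      min_eq_left (one_div_le_one_div_of_le hn' hcase)
    have hmax : max (1/δ) (1/(n:ℝ)) = 1/(n:ℝ) :=
      max_eq_right (one_div_le_one_div_of_le hn' hcase)
    rw [hmin, hmax]
    constructor
    · rw [← int_rpow_eq hδ]
      apply integral_mono_Ico hrpowint hJint
      intro v hv
      have hvpos : (0:ℝ) < 1 - v := by linarith [hv.2]
      have h1 : (1-v)^(δ-(n:ℝ)) ≤ (1-t*v)^(δ-(n:ℝ)) :=
        Real.rpow_le_rpow hvpos.le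
          (by nlinarith [hv.1, mul_le_of_le_one_left hv.1 ht1.le]) (by linarith)
      calc (1-v)^(δ-1) = (1-v)^(n-1) * (1-v)^(δ-(n:ℝ)) := (pow_mul_rpow_eq hn hv.1 hv.2).symm
        _ ≤ (1-v)^(n-1) * (1-t*v)^(δ-(n:ℝ)) :=
            mul_le_mul_of_nonneg_left h1 (pow_nonneg hvpos.le _)
    · rw [← int_pow_eq hn]
      apply integral_mono_Ico hJint hpowint
      intro v hv
      have hb := base_pos ht0 ht1 ⟨hv.1, hv.2.le⟩
      have h1 : (1-t*v)^(δ-(n:ℝ)) ≤ 1 :=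
        Real.rpow_le_one hb.le (by nlinarith [mul_nonneg ht0 hv.1]) (by linarith)
      nlinarith [pow_nonneg (by linarith [hv.2.le] : (0:ℝ) ≤ 1 - v) (n-1),
        mul_le_mul_of_nonneg_left h1 (pow_nonneg (by linarith [hv.2.le] : (0:ℝ) ≤ 1-v) (n-1))]

noncomputable def cf (δ : ℝ) (k : ℕ) : ℝ := poch (-δ) k / (k.factorial : ℝ)

lemma cf_succ (δ : ℝ) (n : ℕ) : cf δ (n+1) * ((n:ℝ)+1) = cf δ n * ((n:ℝ) - δ) := by
  have h : poch (-δ) (n+1) = poch (-δ) n * (-δ + n) := rfl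
  unfold cf
  rw [h, Nat.factorial_succ]
  push_cast
  have h1 : ((n:ℝ)+1) ≠ 0 := by positivity
  have h2 : (n.factorial : ℝ) ≠ 0 := Nat.cast_ne_zero.2 n.factorial_ne_zero
  field_simp
  ring

lemma key_identity (δ : ℝ) {t : ℝ} (ht0 : 0 ≤ t) (ht1 : t < 1) :
    ∀ n : ℕ, 1 ≤ n →
    (1-t)^δ = (∑ k ∈ Finset.range n, cf δ k * t^k) + cf δ n * n * t^n * Jfun δ n t := by
  intro n hn
  induction n, hn using Nat.le_induction with
  | base =>
    have h := J_one δ ht0 ht1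
    have hc0 : cf δ 0 = 1 := by simp [cf, poch]
    have hc1 : cf δ 1 = -δ := by simp [cf, poch]
    rw [Finset.sum_range_one, hc0, hc1]
    push_cast
    nlinarith [h]
  | succ n hn ih =>
    have hn0 : (n:ℝ) ≠ 0 := Nat.cast_ne_zero.2 (by omega)
    have hrec := J_rec δ hn ht0 ht1
    have hrec' : Jfun δ n t * n = 1 + (((n:ℝ)-δ)*t) * Jfun δ (n+1) t := by
      rw [hrec]; field_simp
    have hc := cf_succ δ n
    rw [Finset.sum_range_succ, ih]
    push_cast
    linear_combination (cf δ n * t^n) * hrec' - t^(n+1) * Jfun δ (n+1) t * hc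

lemma pointwise_key (δ : ℝ) (hδ : 0 ≤ δ) {n : ℕ} (hn : 1 ≤ n) {t : ℝ}
    (ht0 : 0 ≤ t) (ht1 : t < 1) :
    min (poch (-δ) n / (n.factorial : ℝ)) (-(poch (1-δ) (n-1) / ((n-1).factorial : ℝ))) * t^n
      ≤ (1-t)^δ - ∑ k ∈ Finset.range n, poch (-δ) k / (k.factorial : ℝ) * t^k ∧
    (1-t)^δ - ∑ k ∈ Finset.range n, poch (-δ) k / (k.factorial : ℝ) * t^k
      ≤ max (poch (-δ) n / (n.factorial : ℝ)) (-(poch (1-δ) (n-1) / ((n-1).factorial : ℝ))) * t^n := by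
  have htn : (0:ℝ) ≤ t^n := pow_nonneg ht0 n
  rcases eq_or_lt_of_le hδ with heq | hpos
  · -- δ = 0
    subst heq
    have hsum : ∑ k ∈ Finset.range n, poch (-(0:ℝ)) k / (k.factorial : ℝ) * t^k = 1 := by
      rw [Finset.sum_eq_single 0]
      · simp [poch]
      · intro k hk hk0
        rw [neg_zero, poch_zero_eq (by omega)]
        simp
      · intro h
        exact absurd (Finset.mem_range.2 (by omega)) h
    rw [hsum, Real.rpow_zero, neg_zero, poch_zero_eq hn,
      show (1:ℝ) - 0 = 1 by ring, poch_one_eq]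
    rw [div_self (Nat.cast_ne_zero.2 (Nat.factorial_ne_zero _))]
    norm_num
    positivity
  · -- δ > 0
    have hn' : (0:ℝ) < n := by exact_mod_cast Nat.pos_of_ne_zero (by omega)
    set a : ℝ := poch (-δ) n / (n.factorial : ℝ) with ha
    set A : ℝ := -(poch (1-δ) (n-1) / ((n-1).factorial : ℝ)) with hA
    have hfac : (n.factorial : ℝ) = n * ((n-1).factorial : ℝ) := by
      obtain ⟨m, rfl⟩ := Nat.exists_eq_add_of_le hn
      rw [show 1 + m = m + 1 by ring]
      push_cast [Nat.factorial_succ]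
      simp
    have hpoch : poch (-δ) n = -δ * poch (1-δ) (n-1) := by
      obtain ⟨m, rfl⟩ := Nat.exists_eq_add_of_le hn
      rw [show 1 + m = m + 1 by ring, poch_succ_left, show -δ+1 = 1-δ by ring]
      norm_num
    have hfac1 : ((n-1).factorial : ℝ) ≠ 0 := Nat.cast_ne_zero.2 (Nat.factorial_ne_zero _)
    have hid := key_identity δ ht0 ht1 n hn
    have hdiff : (1-t)^δ - ∑ k ∈ Finset.range n, poch (-δ) k / (k.factorial : ℝ) * t^k
        = (a * n) * (t^n * Jfun δ n t) := by
      rw [hid]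
      simp only [cf]
      ring
    rw [hdiff]
    have hJ := J_bounds hpos hn ht0 ht1
    set J := Jfun δ n t
    set b : ℝ := a * n with hb
    have hn0 : (n:ℝ) ≠ 0 := ne_of_gt hn'
    have haA : b = δ * A := by
      rw [hb, ha, hA, hpoch, hfac]
      rw [div_mul_eq_mul_div, mul_comm ((n:ℝ)) ((((n-1).factorial : ℕ)):ℝ)]
      rw [mul_div_mul_right _ _ hn0]
      ring_nf
    have hbu : b * (1/δ) = A := by
      rw [haA, mul_one_div, mul_comm δ A, mul_div_assoc, div_self (ne_of_gt hpos), mul_one]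
    have hbw : b * (1/(n:ℝ)) = a := by rw [hb]; field_simp
    have sb : min a A ≤ b * J ∧ b * J ≤ max a A := by
      rcases le_total 0 b with hsb | hsb <;> rcases le_total (1/δ) (1/(n:ℝ)) with huw | huw
      · rw [min_eq_left huw, max_eq_right huw] at hJ
        exact ⟨(min_le_right a A).trans (hbu ▸ mul_le_mul_of_nonneg_left hJ.1 hsb),
          (hbw ▸ mul_le_mul_of_nonneg_left hJ.2 hsb).trans (le_max_left a A)⟩
      · rw [min_eq_right huw, max_eq_left huw] at hJ
        exact ⟨(min_le_left a A).trans (hbw ▸ mul_le_mul_of_nonneg_left hJ.1 hsb),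
          (hbu ▸ mul_le_mul_of_nonneg_left hJ.2 hsb).trans (le_max_right a A)⟩
      · rw [min_eq_left huw, max_eq_right huw] at hJ
        exact ⟨(min_le_left a A).trans (hbw ▸ mul_le_mul_of_nonpos_left hJ.2 hsb),
          (hbu ▸ mul_le_mul_of_nonpos_left hJ.1 hsb).trans (le_max_right a A)⟩
      · rw [min_eq_right huw, max_eq_left huw] at hJ
        exact ⟨(min_le_right a A).trans (hbu ▸ mul_le_mul_of_nonpos_left hJ.2 hsb),
          (hbw ▸ mul_le_mul_of_nonpos_left hJ.1 hsb).trans (le_max_left a A)⟩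
    constructor
    · calc min a A * t^n ≤ (b*J) * t^n := mul_le_mul_of_nonneg_right sb.1 htn
        _ = b * (t^n * J) := by ring
    · calc b * (t^n * J) = (b*J) * t^n := by ring
        _ ≤ max a A * t^n := mul_le_mul_of_nonneg_right sb.2 htn

end Aux
section Int2

open intervalIntegral

lemma G_eq {x ν : ℝ} (hx : 0 < x) (hν : 0 < ν) :
    (∫ t in Set.Ioo (0:ℝ) 1, t^(ν-1) * Real.exp (-(x*t))) = lincGamma ν x / x^ν := by
  have h := integral_comp_mul_left (a := (0:ℝ)) (b := 1)
    (f := fun s => s^(ν-1) * Real.exp (-s)) (c := x) hx.ne'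
  rw [mul_zero, mul_one, smul_eq_mul] at h
  have h2 : (∫ t in (0:ℝ)..1, (x*t)^(ν-1) * Real.exp (-(x*t)))
      = x^(ν-1) * ∫ t in (0:ℝ)..1, t^(ν-1) * Real.exp (-(x*t)) := by
    rw [← intervalIntegral.integral_const_mul]
    refine integral_congr fun t ht => ?_
    rw [Set.uIcc_of_le zero_le_one] at ht
    rw [Real.mul_rpow hx.le ht.1]
    ring
  have hioo : (∫ t in (0:ℝ)..1, t^(ν-1)*Real.exp (-(x*t)))
      = ∫ t in Set.Ioo (0:ℝ) 1, t^(ν-1)*Real.exp (-(x*t)) := by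
    rw [integral_of_le zero_le_one, MeasureTheory.integral_Ioc_eq_integral_Ioo]
  have hxν : x^ν = x^(ν-1) * x := by
    rw [← Real.rpow_add_one hx.ne' (ν-1)]; norm_num
  have key : x^(ν-1) * (∫ t in (0:ℝ)..1, t^(ν-1) * Real.exp (-(x*t)))
      = x⁻¹ * lincGamma ν x := by
    rw [← h2]
    exact h
  rw [← hioo]
  rw [hxν, eq_div_iff (by positivity)]
  calc (∫ t in (0:ℝ)..1, t^(ν-1) * Real.exp (-(x*t))) * (x^(ν-1)*x)
      = (x^(ν-1) * (∫ t in (0:ℝ)..1, t^(ν-1) * Real.exp (-(x*t)))) * x := by ring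
    _ = (x⁻¹ * lincGamma ν x) * x := by rw [key]
    _ = lincGamma ν x := by field_simp

lemma integrableOn_rpow_exp {x : ℝ} (hx : 0 < x) {p : ℝ} (hp : -1 < p) :
    IntegrableOn (fun t => t^p * Real.exp (-(x*t))) (Set.Ioo (0:ℝ) 1) volume := by
  have hg : IntegrableOn (fun t : ℝ => t^p) (Set.Ioo (0:ℝ) 1) volume := by
    have h := intervalIntegral.intervalIntegrable_rpow' (a := 0) (b := 1) hp
    rwa [intervalIntegrable_iff_integrableOn_Ioo_of_le zero_le_one] at h
  apply Integrable.mono hg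
  · apply ContinuousOn.aestronglyMeasurable _ measurableSet_Ioo
    exact (ContinuousOn.rpow_const continuousOn_id (fun t ht => Or.inl (ne_of_gt ht.1))).mul
      (Real.continuous_exp.comp (continuous_const.mul continuous_id).neg).continuousOn
  · filter_upwards [ae_restrict_mem measurableSet_Ioo] with t ht
    have h1 : (0:ℝ) ≤ t^p := Real.rpow_nonneg ht.1.le p
    have hexp : Real.exp (-(x*t)) ≤ 1 := by
      have h := Real.exp_le_exp.2 (show -(x*t) ≤ 0 by nlinarith [ht.1])
      simpa using h
    rw [Real.norm_eq_abs, Real.norm_eq_abs,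
      abs_of_nonneg (mul_nonneg h1 (Real.exp_pos _).le), abs_of_nonneg h1]
    nlinarith [Real.exp_pos (-(x*t))]

lemma integrableOn_main {x α δ : ℝ} (hx : 0 < x) (hα : 0 < α) (hδ : 0 ≤ δ) :
    IntegrableOn (fun t => t^(α-1) * (1-t)^δ * Real.exp (-(x*t)))
      (Set.Ioo (0:ℝ) 1) volume := by
  have hg : IntegrableOn (fun t : ℝ => t^(α-1)) (Set.Ioo (0:ℝ) 1) volume := by
    have h := intervalIntegral.intervalIntegrable_rpow' (a := 0) (b := 1)
      (show (-1:ℝ) < α - 1 by linarith)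
    rwa [intervalIntegrable_iff_integrableOn_Ioo_of_le zero_le_one] at h
  apply Integrable.mono hg
  · apply ContinuousOn.aestronglyMeasurable _ measurableSet_Ioo
    refine ContinuousOn.mul (ContinuousOn.mul ?_ ?_) ?_
    · exact ContinuousOn.rpow_const continuousOn_id (fun t ht => Or.inl (ne_of_gt ht.1))
    · exact ContinuousOn.rpow_const (continuous_const.sub continuous_id).continuousOn
        (fun t ht => Or.inl (by simp; intro hcon; simp [hcon] at ht; linarith [ht.2]))
    · exact (Real.continuous_exp.comp (continuous_const.mul continuous_id).neg).continuousOn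
  · filter_upwards [ae_restrict_mem measurableSet_Ioo] with t ht
    have h1 : (0:ℝ) ≤ t^(α-1) := Real.rpow_nonneg ht.1.le _
    have h2 : (0:ℝ) ≤ (1-t)^δ := Real.rpow_nonneg (by linarith [ht.2]) _
    have h2' : (1-t)^δ ≤ 1 := Real.rpow_le_one (by linarith [ht.2]) (by linarith [ht.1]) hδ
    have hexp : Real.exp (-(x*t)) ≤ 1 := by
      have h := Real.exp_le_exp.2 (show -(x*t) ≤ 0 by nlinarith [ht.1])
      simpa using h
    rw [Real.norm_eq_abs, Real.norm_eq_abs,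
      abs_of_nonneg (mul_nonneg (mul_nonneg h1 h2) (Real.exp_pos _).le), abs_of_nonneg h1]
    nlinarith [mul_le_mul_of_nonneg_left h2' h1,
      mul_le_mul_of_nonneg_left hexp (mul_nonneg h1 h2), Real.exp_pos (-(x*t))]

end Int2
theorem kummer_gamma_bounds_nonneg_delta
    (δ : ℝ) (hδ : 0 ≤ δ) (α : ℝ) (hα : 0 < α) (n : ℕ) (hn : 1 ≤ n)
    (x : ℝ) (hx : 0 < x) :
    (∑ k ∈ Finset.range n,
        poch (-δ) k / (k.factorial : ℝ) * (lincGamma (α + k) x / x ^ (α + (k:ℝ)))) +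
      min (poch (-δ) n / (n.factorial : ℝ))
          (-(poch (1 - δ) (n - 1) / ((n - 1).factorial : ℝ))) *
        (lincGamma (α + n) x / x ^ (α + (n:ℝ)))
      ≤ NKummer α δ x ∧
    NKummer α δ x ≤
      (∑ k ∈ Finset.range n,
        poch (-δ) k / (k.factorial : ℝ) * (lincGamma (α + k) x / x ^ (α + (k:ℝ)))) +
      max (poch (-δ) n / (n.factorial : ℝ))
          (-(poch (1 - δ) (n - 1) / ((n - 1).factorial : ℝ))) *
        (lincGamma (α + n) x / x ^ (α + (n:ℝ))) := by
  have hNf : NKummer α δ x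
      = ∫ t in Set.Ioo (0:ℝ) 1, t^(α-1)*(1-t)^δ*Real.exp (-(x*t)) := by
    unfold NKummer
    rw [intervalIntegral.integral_of_le zero_le_one,
      MeasureTheory.integral_Ioc_eq_integral_Ioo]
  have hG : ∀ k : ℕ, (∫ t in Set.Ioo (0:ℝ) 1, t^((α+(k:ℝ))-1) * Real.exp (-(x*t)))
      = lincGamma (α+k) x / x^(α+(k:ℝ)) := fun k => G_eq hx (by positivity)
  have hInt : ∀ k : ℕ, IntegrableOn
      (fun t => t^((α+(k:ℝ))-1) * Real.exp (-(x*t))) (Set.Ioo (0:ℝ) 1) volume := by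
    intro k
    apply integrableOn_rpow_exp hx
    have : (0:ℝ) ≤ (k:ℝ) := Nat.cast_nonneg k
    linarith
  have hIntf := integrableOn_main hx hα hδ
  have hIntS : IntegrableOn
      (fun t => ∑ k ∈ Finset.range n,
        poch (-δ) k / (k.factorial : ℝ) * (t^((α+(k:ℝ))-1) * Real.exp (-(x*t))))
      (Set.Ioo (0:ℝ) 1) volume := by
    apply MeasureTheory.integrable_finset_sum
    intro k _
    exact (hInt k).const_mul _
  have hIntL : ∀ q : ℝ, IntegrableOn
      (fun t => (∑ k ∈ Finset.range n,
          poch (-δ) k / (k.factorial : ℝ) * (t^((α+(k:ℝ))-1) * Real.exp (-(x*t))))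
        + q * (t^((α+(n:ℝ))-1) * Real.exp (-(x*t)))) (Set.Ioo (0:ℝ) 1) volume :=
    fun q => hIntS.add ((hInt n).const_mul _)
  have hIL : ∀ q : ℝ, (∫ t in Set.Ioo (0:ℝ) 1,
        ((∑ k ∈ Finset.range n,
          poch (-δ) k / (k.factorial : ℝ) * (t^((α+(k:ℝ))-1) * Real.exp (-(x*t))))
        + q * (t^((α+(n:ℝ))-1) * Real.exp (-(x*t)))))
      = (∑ k ∈ Finset.range n,
          poch (-δ) k / (k.factorial : ℝ) * (lincGamma (α+k) x / x^(α+(k:ℝ))))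
        + q * (lincGamma (α+n) x / x^(α+(n:ℝ))) := by
    intro q
    rw [MeasureTheory.integral_add hIntS ((hInt n).const_mul _),
      MeasureTheory.integral_finset_sum _ (fun k _ => (hInt k).const_mul _)]
    simp_rw [MeasureTheory.integral_const_mul]
    rw [hG n]
    congr 1
    exact Finset.sum_congr rfl fun k _ => by rw [hG k]
  -- pointwise comparison
  have hsplit : ∀ (k : ℕ) (t : ℝ), t ∈ Set.Ioo (0:ℝ) 1 →
      t^((α+(k:ℝ))-1) = t^(α-1) * t^k := by
    intro k t ht
    rw [← Real.rpow_natCast t k, ← Real.rpow_add ht.1]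
    congr 1
    ring
  have hshape : ∀ (q : ℝ) (t : ℝ), t ∈ Set.Ioo (0:ℝ) 1 →
      (∑ k ∈ Finset.range n,
          poch (-δ) k / (k.factorial : ℝ) * (t^((α+(k:ℝ))-1) * Real.exp (-(x*t))))
        + q * (t^((α+(n:ℝ))-1) * Real.exp (-(x*t)))
      = ((∑ k ∈ Finset.range n, poch (-δ) k / (k.factorial : ℝ) * t^k) + q * t^n)
          * (t^(α-1) * Real.exp (-(x*t))) := by
    intro q t ht
    rw [hsplit n t ht, add_mul, Finset.sum_mul]
    congr 1
    · refine Finset.sum_congr rfl fun k _ => ?_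
      rw [hsplit k t ht]
      ring
    · ring
  have hP : ∀ t : ℝ, t ∈ Set.Ioo (0:ℝ) 1 → (0:ℝ) ≤ t^(α-1) * Real.exp (-(x*t)) :=
    fun t ht => mul_nonneg (Real.rpow_nonneg ht.1.le _) (Real.exp_pos _).le
  constructor
  · rw [hNf, ← hIL _]
    apply MeasureTheory.setIntegral_mono_on (hIntL _) hIntf measurableSet_Ioo
    intro t ht
    rw [hshape _ t ht]
    have hkey := (pointwise_key δ hδ hn ht.1.le ht.2).1
    calc ((∑ k ∈ Finset.range n, poch (-δ) k / (k.factorial : ℝ) * t^k)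
            + min (poch (-δ) n / (n.factorial : ℝ))
              (-(poch (1-δ) (n-1) / ((n-1).factorial : ℝ))) * t^n)
          * (t^(α-1) * Real.exp (-(x*t)))
        ≤ (1-t)^δ * (t^(α-1) * Real.exp (-(x*t))) := by
          apply mul_le_mul_of_nonneg_right _ (hP t ht)
          linarith [hkey]
      _ = t^(α-1) * (1-t)^δ * Real.exp (-(x*t)) := by ring
  · rw [hNf, ← hIL _]
    apply MeasureTheory.setIntegral_mono_on hIntf (hIntL _) measurableSet_Ioo
    intro t ht
    rw [hshape _ t ht]
    have hkey := (pointwise_key δ hδ hn ht.1.le ht.2).2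
    calc t^(α-1) * (1-t)^δ * Real.exp (-(x*t))
        = (1-t)^δ * (t^(α-1) * Real.exp (-(x*t))) := by ring
      _ ≤ ((∑ k ∈ Finset.range n, poch (-δ) k / (k.factorial : ℝ) * t^k)
            + max (poch (-δ) n / (n.factorial : ℝ))
              (-(poch (1-δ) (n-1) / ((n-1).factorial : ℝ))) * t^n)
          * (t^(α-1) * Real.exp (-(x*t))) := by
          apply mul_le_mul_of_nonneg_right _ (hP t ht)
          linarith [hkey]
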